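/- For all α > 0, σ ∈ (0,1), and c > 0, the quantity (α · Γ(1+c) / Γ(c+σ)) · Σ_{n=1}^{N} Γ(n+c+σ−1)/Γ(n+c), divided by N^σ, converges to (α/σ) · Γ(c+1)/Γ(c+σ) as N → ∞, where Γ denotes the real Gamma function. (This is the analytic content of Proposition 1: the expected number of vertices in a random clique cover with N generating cliques grows as (α/σ)·Γ(c+1)/Γ(c+σ) · N^σ.) -/

import Mathlib

open Real Filter Finset

open Topology

lemma gamma_prod (s : ℝ) (hs : 0 < s) (n : ℕ) :
    Real.Gamma (s + n + 1) = Real.Gamma s * ∏ j ∈ Finset.range (n + 1), (s + j) := by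
  induction n with
  | zero => simp [Real.Gamma_add_one hs.ne', mul_comm]
  | succ n ih =>
    have h1 : (0:ℝ) < s + n + 1 := by positivity
    have h2 : Real.Gamma (s + ↑(n+1) + 1) = (s + n + 1) * Real.Gamma (s + n + 1) := by
      rw [show s + ((n+1:ℕ):ℝ) + 1 = (s + n + 1) + 1 by push_cast; ring,
        Real.Gamma_add_one h1.ne']
    rw [h2, Finset.prod_range_succ, ih, Nat.cast_add, Nat.cast_one]
    ring

lemma ratio1 (s : ℝ) (hs : 0 < s) :
    Tendsto (fun n : ℕ => Real.Gamma (s + n + 1) / (Real.Gamma (n + 1) * (n : ℝ) ^ s))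
      atTop (𝓝 1) := by
  have hGpos : 0 < Real.Gamma s := Real.Gamma_pos_of_pos hs
  have h := Filter.Tendsto.div (tendsto_const_nhds (x := Real.Gamma s))
    (Real.GammaSeq_tendsto_Gamma s) hGpos.ne'
  rw [div_self hGpos.ne'] at h
  refine h.congr' ?_
  filter_upwards [eventually_ge_atTop 1] with n hn
  have hn0 : (0:ℝ) < (n:ℝ) := by exact_mod_cast hn
  have hns : (0:ℝ) < (n:ℝ) ^ s := Real.rpow_pos_of_pos hn0 s
  have hG1 : 0 < Real.Gamma ((n:ℝ) + 1) := Real.Gamma_pos_of_pos (by positivity)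
  have hG2 : 0 < Real.Gamma (s + n + 1) := Real.Gamma_pos_of_pos (by positivity)
  have hP : (0:ℝ) < ∏ j ∈ Finset.range (n + 1), (s + j) :=
    Finset.prod_pos fun j _ => by positivity
  unfold Real.GammaSeq
  simp only [Pi.div_apply]
  rw [← Real.Gamma_nat_eq_factorial, gamma_prod s hs n]
  field_simp

lemma ratio2 (s : ℝ) (hs : 0 < s) :
    Tendsto (fun N : ℕ => Real.Gamma ((N : ℝ) + s) / (Real.Gamma N * (N : ℝ) ^ s))
      atTop (𝓝 1) := by
  rw [← tendsto_add_atTop_iff_nat 1]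
  have hq : Tendsto (fun n : ℕ => ((n : ℝ) / (n + 1)) ^ s) atTop (𝓝 1) := by
    have h0 : Tendsto (fun n : ℕ => (n : ℝ) / (n + 1)) atTop (𝓝 1) := by
      have := tendsto_one_div_add_atTop_nhds_zero_nat (𝕜 := ℝ)
      have h2 := (tendsto_const_nhds (x := (1:ℝ))).sub this
      rw [sub_zero] at h2
      refine h2.congr fun n => ?_
      have : ((n : ℝ) + 1) ≠ 0 := by positivity
      field_simp
      ring
    have := h0.rpow_const (p := s) (Or.inr hs.le)
    rwa [Real.one_rpow] at this
  have h := (ratio1 s hs).mul hq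
  rw [mul_one] at h
  refine h.congr' ?_
  filter_upwards [eventually_ge_atTop 1] with n hn
  have hn0 : (0:ℝ) < (n:ℝ) := by exact_mod_cast hn
  have hns : (0:ℝ) < (n:ℝ) ^ s := Real.rpow_pos_of_pos hn0 s
  have hn1s : (0:ℝ) < ((n:ℝ)+1) ^ s := Real.rpow_pos_of_pos (by positivity) s
  have hG1 : 0 < Real.Gamma ((n:ℝ) + 1) := Real.Gamma_pos_of_pos (by positivity)
  rw [Real.div_rpow hn0.le (by positivity)]
  rw [show ((n + 1 : ℕ) : ℝ) + s = s + n + 1 by push_cast; ring,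
    show ((n + 1 : ℕ) : ℝ) = (n : ℝ) + 1 by push_cast; ring]
  field_simp

lemma telescope (σ c : ℝ) (hσ : 0 < σ) (hc : 0 < c) (N : ℕ) :
    ∑ n ∈ Finset.Icc 1 N, Real.Gamma ((n : ℝ) + c + σ - 1) / Real.Gamma ((n : ℝ) + c)
      = (Real.Gamma ((N : ℝ) + c + σ) / Real.Gamma ((N : ℝ) + c)
          - Real.Gamma (c + σ) / Real.Gamma c) / σ := by
  induction N with
  | zero => simp
  | succ N ih =>
    rw [Finset.sum_Icc_succ_top (Nat.succ_le_succ (Nat.zero_le N)), ih]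
    have hNc : (0:ℝ) < (N:ℝ) + c := by positivity
    have hNcσ : (0:ℝ) < (N:ℝ) + c + σ := by positivity
    have hG1 : 0 < Real.Gamma ((N:ℝ) + c) := Real.Gamma_pos_of_pos hNc
    have hG2 : 0 < Real.Gamma ((N:ℝ) + c + σ) := Real.Gamma_pos_of_pos hNcσ
    rw [show ((N + 1 : ℕ) : ℝ) + c + σ - 1 = (N:ℝ) + c + σ by push_cast; ring,
      show ((N + 1 : ℕ) : ℝ) + c + σ = ((N:ℝ) + c + σ) + 1 by push_cast; ring,
      show ((N + 1 : ℕ) : ℝ) + c = ((N:ℝ) + c) + 1 by push_cast; ring,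
      Real.Gamma_add_one hNcσ.ne', Real.Gamma_add_one hNc.ne']
    field_simp
    ring

/-- Proposition 1, analytic content: the expected number of
vertices after N cliques, `(α·Γ(1+c)/Γ(c+σ)) · Σ_{n=1}^{N} Γ(n+c+σ−1)/Γ(n+c)`,
grows like `(α/σ)·Γ(c+1)/Γ(c+σ) · N^σ`. -/
theorem expected_vertices_powerLaw (α σ c : ℝ)
    (hα : 0 < α) (hσ : σ ∈ Set.Ioo (0 : ℝ) 1) (hc : 0 < c) :
    Tendsto (fun N : ℕ =>
        (α * Real.Gamma (1 + c) / Real.Gamma (c + σ)) *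
          (∑ n ∈ Finset.Icc 1 N,
            Real.Gamma ((n : ℝ) + c + σ - 1) / Real.Gamma ((n : ℝ) + c))
          / (N : ℝ) ^ σ)
      atTop (nhds ((α / σ) * Real.Gamma (c + 1) / Real.Gamma (c + σ))) := by
  obtain ⟨hσ0, hσ1⟩ := hσ
  have h1 : Tendsto (fun N : ℕ =>
      Real.Gamma ((N:ℝ) + c + σ) / Real.Gamma ((N:ℝ) + c) / (N:ℝ) ^ σ) atTop (𝓝 1) := by
    have h := (ratio2 (c + σ) (by positivity)).div (ratio2 c hc) one_ne_zero
    rw [div_one] at h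
    refine h.congr' ?_
    filter_upwards [eventually_ge_atTop 1] with N hN
    have hN0 : (0:ℝ) < (N:ℝ) := by exact_mod_cast hN
    have hGN : 0 < Real.Gamma (N:ℝ) := Real.Gamma_pos_of_pos hN0
    have hGc : 0 < Real.Gamma ((N:ℝ) + c) := Real.Gamma_pos_of_pos (by positivity)
    have hrc : (0:ℝ) < (N:ℝ) ^ c := Real.rpow_pos_of_pos hN0 c
    have hrσ : (0:ℝ) < (N:ℝ) ^ σ := Real.rpow_pos_of_pos hN0 σ
    simp only [Pi.div_apply]
    rw [show (N:ℝ) + (c + σ) = (N:ℝ) + c + σ by ring, Real.rpow_add hN0]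
    field_simp
  have h2 : Tendsto (fun N : ℕ =>
      Real.Gamma (c + σ) / Real.Gamma c / (N:ℝ) ^ σ) atTop (𝓝 0) := by
    refine Tendsto.div_atTop tendsto_const_nhds ?_
    exact (tendsto_rpow_atTop hσ0).comp tendsto_natCast_atTop_atTop
  have key := (tendsto_const_nhds
      (x := α * Real.Gamma (1 + c) / Real.Gamma (c + σ) / σ)).mul (h1.sub h2)
  rw [sub_zero, mul_one] at key
  rw [show (α / σ) * Real.Gamma (c + 1) / Real.Gamma (c + σ)
      = α * Real.Gamma (1 + c) / Real.Gamma (c + σ) / σ by rw [add_comm 1 c]; ring]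
  refine key.congr' ?_
  filter_upwards [eventually_ge_atTop 1] with N hN
  rw [telescope σ c hσ0 hc N]
  ring
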